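/- Let Θ, Θ' be n×K clustering matrices with n_max = max over both of the largest class size, and let B be a symmetric K×K matrix with ‖B‖ ≤ C·α. If Θ and Θ' differ in at most m rows, then ‖Θ' B Θ'ᵀ − Θ B Θᵀ‖ ≤ 2·C·α·√(2 m n_max). -/

import Mathlib

open Matrix

noncomputable def specNorm {m n : ℕ} (M : Matrix (Fin m) (Fin n) ℝ) : ℝ :=
  ‖LinearMap.toContinuousLinearMap (Matrix.toEuclideanLin M)‖

def IsClusterMatrix {n K : ℕ} (Θ : Matrix (Fin n) (Fin K) ℝ) : Prop :=
  (∀ i k, Θ i k = 0 ∨ Θ i k = 1) ∧ ∀ i, ∑ k, Θ i k = 1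

noncomputable def eigDesc {n : ℕ} (M : Matrix (Fin n) (Fin n) ℝ)
    (hM : M.IsHermitian) : ℕ → ℝ :=
  fun j => if h : j < n then hM.eigenvalues (Tuple.sort hM.eigenvalues (Fin.rev ⟨j, h⟩)) else 0

lemma specNorm_nonneg {a b : ℕ} (M : Matrix (Fin a) (Fin b) ℝ) : 0 ≤ specNorm M := by
  unfold specNorm; exact norm_nonneg _

lemma specNorm_mul_le {a b c : ℕ} (A : Matrix (Fin a) (Fin b) ℝ) (B : Matrix (Fin b) (Fin c) ℝ) :
    specNorm (A*B) ≤ specNorm A * specNorm B := by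
  have h : LinearMap.toContinuousLinearMap (toEuclideanLin (A*B)) =
      (LinearMap.toContinuousLinearMap (toEuclideanLin A)).comp
      (LinearMap.toContinuousLinearMap (toEuclideanLin B)) := by
    ext x
    simp [Matrix.toEuclideanLin_apply, Matrix.mulVec_mulVec]
  rw [specNorm, h]
  exact ContinuousLinearMap.opNorm_comp_le _ _

lemma specNorm_add_le {a b : ℕ} (A B : Matrix (Fin a) (Fin b) ℝ) :
    specNorm (A+B) ≤ specNorm A + specNorm B := by
  rw [specNorm, map_add, map_add]
  exact norm_add_le _ _

lemma specNorm_le_sqrt {a b : ℕ} (M : Matrix (Fin a) (Fin b) ℝ) (c : ℝ) (hc : 0 ≤ c)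
    (h : ∀ x : Fin b → ℝ, ∑ i, (M.mulVec x i)^2 ≤ c * ∑ j, (x j)^2) :
    specNorm M ≤ Real.sqrt c := by
  apply ContinuousLinearMap.opNorm_le_bound _ (Real.sqrt_nonneg c)
  intro x
  rw [LinearMap.coe_toContinuousLinearMap']
  rw [EuclideanSpace.norm_eq, EuclideanSpace.norm_eq, ← Real.sqrt_mul hc]
  apply Real.sqrt_le_sqrt
  simp only [Matrix.toEuclideanLin_apply, Real.norm_eq_abs, sq_abs]
  exact h _

lemma specNorm_triple_le {a b c d : ℕ} (A : Matrix (Fin a) (Fin b) ℝ)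
    (B : Matrix (Fin b) (Fin c) ℝ) (Ct : Matrix (Fin c) (Fin d) ℝ) {x y z : ℝ}
    (hA : specNorm A ≤ x) (hB : specNorm B ≤ y) (hC : specNorm Ct ≤ z) :
    specNorm (A*B*Ct) ≤ x*y*z := by
  have h0 : 0 ≤ x := le_trans (specNorm_nonneg A) hA
  have h1 : 0 ≤ y := le_trans (specNorm_nonneg B) hB
  calc specNorm (A*B*Ct) ≤ specNorm (A*B) * specNorm Ct := specNorm_mul_le _ _
    _ ≤ (specNorm A * specNorm B) * specNorm Ct :=
        mul_le_mul_of_nonneg_right (specNorm_mul_le _ _) (specNorm_nonneg _)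
    _ ≤ x*y*z := by
        apply mul_le_mul (mul_le_mul hA hB (specNorm_nonneg _) h0) hC (specNorm_nonneg _)
        exact mul_nonneg h0 h1

lemma col_sum_eq {n K : ℕ} (Θ : Matrix (Fin n) (Fin K) ℝ)
    (h01 : ∀ i k, Θ i k = 0 ∨ Θ i k = 1) (k : Fin K) :
    ∑ i, Θ i k = ((Finset.univ.filter fun i => Θ i k = 1).card : ℝ) := by
  rw [Finset.card_filter, Nat.cast_sum]
  apply Finset.sum_congr rfl
  intro i _
  rcases h01 i k with h | h <;> simp [h]

lemma cluster_mulVec_bound {n K : ℕ} (Θ : Matrix (Fin n) (Fin K) ℝ)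
    (h01 : ∀ i k, Θ i k = 0 ∨ Θ i k = 1) (hrow : ∀ i, ∑ k, Θ i k = 1)
    (nmax : ℕ) (hcol : ∀ k, ((Finset.univ.filter fun i => Θ i k = 1).card : ℝ) ≤ nmax)
    (x : Fin K → ℝ) : ∑ i, (Θ.mulVec x i)^2 ≤ nmax * ∑ j, (x j)^2 := by
  have hsq : ∀ i k, Θ i k ^ 2 = Θ i k := by
    intro i k; rcases h01 i k with h | h <;> simp [h]
  have step : ∀ i, (Θ.mulVec x i)^2 ≤ ∑ k, Θ i k * (x k)^2 := by
    intro i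
    have cs := Finset.sum_mul_sq_le_sq_mul_sq Finset.univ
      (fun k => Θ i k) (fun k => Θ i k * x k)
    simp only [mul_pow, hsq] at cs
    have e1 : ∑ k, Θ i k * (Θ i k * x k) = Θ.mulVec x i := by
      rw [Matrix.mulVec, dotProduct]
      apply Finset.sum_congr rfl
      intro k _
      rw [← mul_assoc, ← sq, hsq]
    rw [e1, hrow i, one_mul] at cs
    exact cs
  calc ∑ i, (Θ.mulVec x i)^2 ≤ ∑ i, ∑ k, Θ i k * (x k)^2 :=
        Finset.sum_le_sum fun i _ => step i
    _ = ∑ k, (∑ i, Θ i k) * (x k)^2 := by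
        rw [Finset.sum_comm]
        exact Finset.sum_congr rfl fun k _ => (Finset.sum_mul _ _ _).symm
    _ ≤ ∑ k, (nmax : ℝ) * (x k)^2 := by
        apply Finset.sum_le_sum
        intro k _
        apply mul_le_mul_of_nonneg_right _ (sq_nonneg _)
        rw [col_sum_eq Θ h01 k]
        exact hcol k
    _ = nmax * ∑ j, (x j)^2 := by rw [Finset.mul_sum]

lemma cluster_transpose_mulVec_bound {n K : ℕ} (Θ : Matrix (Fin n) (Fin K) ℝ)
    (h01 : ∀ i k, Θ i k = 0 ∨ Θ i k = 1) (hrow : ∀ i, ∑ k, Θ i k = 1)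
    (nmax : ℕ) (hcol : ∀ k, ((Finset.univ.filter fun i => Θ i k = 1).card : ℝ) ≤ nmax)
    (y : Fin n → ℝ) : ∑ k, (Θᵀ.mulVec y k)^2 ≤ nmax * ∑ i, (y i)^2 := by
  have hsq : ∀ i k, Θ i k ^ 2 = Θ i k := by
    intro i k; rcases h01 i k with h | h <;> simp [h]
  have step : ∀ k, (Θᵀ.mulVec y k)^2 ≤ (nmax : ℝ) * ∑ i, Θ i k * (y i)^2 := by
    intro k
    have cs := Finset.sum_mul_sq_le_sq_mul_sq Finset.univ
      (fun i => Θ i k) (fun i => Θ i k * y i)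
    simp only [mul_pow, hsq] at cs
    have e1 : ∑ i, Θ i k * (Θ i k * y i) = Θᵀ.mulVec y k := by
      rw [Matrix.mulVec, dotProduct]
      apply Finset.sum_congr rfl
      intro i _
      rw [Matrix.transpose_apply, ← mul_assoc, ← sq, hsq]
    rw [e1] at cs
    refine le_trans cs (mul_le_mul_of_nonneg_right ?_ ?_)
    · rw [col_sum_eq Θ h01 k]; exact hcol k
    · apply Finset.sum_nonneg
      intro i _
      have : 0 ≤ Θ i k := by rcases h01 i k with h | h <;> simp [h]
      exact mul_nonneg this (sq_nonneg _)
  calc ∑ k, (Θᵀ.mulVec y k)^2 ≤ ∑ k, (nmax : ℝ) * ∑ i, Θ i k * (y i)^2 :=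
        Finset.sum_le_sum fun k _ => step k
    _ = nmax * ∑ i, (∑ k, Θ i k) * (y i)^2 := by
        rw [← Finset.mul_sum, Finset.sum_comm]
        congr 1
        exact Finset.sum_congr rfl fun i _ => (Finset.sum_mul _ _ _).symm
    _ = nmax * ∑ i, (y i)^2 := by
        congr 1
        exact Finset.sum_congr rfl fun i _ => by rw [hrow i, one_mul]

lemma frobenius_mulVec_bound {a b : ℕ} (D : Matrix (Fin a) (Fin b) ℝ) (c : ℝ)
    (h : ∑ i, ∑ j, (D i j)^2 ≤ c) (x : Fin b → ℝ) :
    ∑ i, (D.mulVec x i)^2 ≤ c * ∑ j, (x j)^2 := by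
  have hx : 0 ≤ ∑ j, (x j)^2 := Finset.sum_nonneg fun j _ => sq_nonneg _
  have step : ∀ i, (D.mulVec x i)^2 ≤ (∑ j, (D i j)^2) * ∑ j, (x j)^2 := by
    intro i
    exact Finset.sum_mul_sq_le_sq_mul_sq Finset.univ (fun j => D i j) x
  calc ∑ i, (D.mulVec x i)^2 ≤ ∑ i, (∑ j, (D i j)^2) * ∑ j, (x j)^2 :=
        Finset.sum_le_sum fun i _ => step i
    _ = (∑ i, ∑ j, (D i j)^2) * ∑ j, (x j)^2 := (Finset.sum_mul _ _ _).symm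
    _ ≤ c * ∑ j, (x j)^2 := mul_le_mul_of_nonneg_right h hx

lemma cluster_diff_frobenius {n K m : ℕ} (Θ Θ' : Matrix (Fin n) (Fin K) ℝ)
    (h01 : ∀ i k, Θ i k = 0 ∨ Θ i k = 1) (h01' : ∀ i k, Θ' i k = 0 ∨ Θ' i k = 1)
    (hrow : ∀ i, ∑ k, Θ i k = 1) (hrow' : ∀ i, ∑ k, Θ' i k = 1)
    [DecidablePred fun i => Θ i ≠ Θ' i]
    (hm : (Finset.univ.filter (fun i => Θ i ≠ Θ' i)).card ≤ m) :
    ∑ i, ∑ k, (Θ' i k - Θ i k)^2 ≤ 2 * m := by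
  have rowb : ∀ i, ∑ k, (Θ' i k - Θ i k)^2 ≤ if Θ i ≠ Θ' i then 2 else 0 := by
    intro i
    by_cases h : Θ i = Θ' i
    · simp only [h, ne_eq, not_true_eq_false, if_false]
      apply le_of_eq
      apply Finset.sum_eq_zero
      intro k _
      rw [show Θ' i k = Θ i k from by rw [h], sub_self]
      ring
    · simp only [ne_eq, h, not_false_eq_true, if_true]
      calc ∑ k, (Θ' i k - Θ i k)^2 ≤ ∑ k, (Θ' i k + Θ i k) := by
            apply Finset.sum_le_sum
            intro k _
            rcases h01 i k with h1 | h1 <;> rcases h01' i k with h2 | h2 <;>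
              rw [h1, h2] <;> norm_num
        _ = 2 := by rw [Finset.sum_add_distrib, hrow i, hrow' i]; norm_num
  calc ∑ i, ∑ k, (Θ' i k - Θ i k)^2 ≤ ∑ i, if Θ i ≠ Θ' i then (2:ℝ) else 0 :=
        Finset.sum_le_sum fun i _ => rowb i
    _ = 2 * (Finset.univ.filter (fun i => Θ i ≠ Θ' i)).card := by
        rw [Finset.sum_ite, Finset.sum_const, Finset.sum_const]
        simp [mul_comm]
    _ ≤ 2 * m := by
        have h2 : ((Finset.univ.filter (fun i => Θ i ≠ Θ' i)).card : ℝ) ≤ m := by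
          exact_mod_cast hm
        linarith

theorem cluster_sandwich_perturbation {n K m : ℕ}
    (Θ Θ' : Matrix (Fin n) (Fin K) ℝ)
    (hΘ : IsClusterMatrix Θ) (hΘ' : IsClusterMatrix Θ')
    (B : Matrix (Fin K) (Fin K) ℝ) (hB : B.IsHermitian)
    (C α : ℝ) (hBnorm : specNorm B ≤ C * α)
    (nmax : ℕ)
    (hnmax : nmax = max
      (Finset.univ.sup fun k => (Finset.univ.filter fun i => Θ i k = 1).card)
      (Finset.univ.sup fun k => (Finset.univ.filter fun i => Θ' i k = 1).card))
    (hm : (@Finset.filter _ (fun i => Θ i ≠ Θ' i)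
      (fun i => @instDecidableNot _ (Fintype.decidablePiFintype (Θ i) (Θ' i))) Finset.univ).card ≤ m) :
    specNorm (Θ' * B * Θ'ᵀ - Θ * B * Θᵀ) ≤ 2 * C * α * Real.sqrt (2 * m * nmax) := by
  obtain ⟨h01, hrow⟩ := hΘ
  obtain ⟨h01', hrow'⟩ := hΘ'
  have hCα : 0 ≤ C * α := le_trans (specNorm_nonneg B) hBnorm
  -- column size bounds
  have hcol : ∀ k, ((Finset.univ.filter fun i => Θ i k = 1).card : ℝ) ≤ nmax := by
    intro k
    have h1 : (Finset.univ.filter fun i => Θ i k = 1).card ≤ nmax := by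
      rw [hnmax]
      exact le_max_of_le_left (Finset.le_sup (f := fun k => (Finset.univ.filter fun i => Θ i k = 1).card) (Finset.mem_univ k))
    exact_mod_cast h1
  have hcol' : ∀ k, ((Finset.univ.filter fun i => Θ' i k = 1).card : ℝ) ≤ nmax := by
    intro k
    have h1 : (Finset.univ.filter fun i => Θ' i k = 1).card ≤ nmax := by
      rw [hnmax]
      exact le_max_of_le_right (Finset.le_sup (f := fun k => (Finset.univ.filter fun i => Θ' i k = 1).card) (Finset.mem_univ k))
    exact_mod_cast h1
  -- spectral norm bounds
  have hΘn : specNorm Θ ≤ Real.sqrt nmax :=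
    specNorm_le_sqrt _ _ (Nat.cast_nonneg _)
      (cluster_mulVec_bound Θ h01 hrow nmax hcol)
  have hΘ'Tn : specNorm Θ'ᵀ ≤ Real.sqrt nmax :=
    specNorm_le_sqrt _ _ (Nat.cast_nonneg _)
      (cluster_transpose_mulVec_bound Θ' h01' hrow' nmax hcol')
  have hfro : ∑ i, ∑ k, ((Θ' - Θ) i k)^2 ≤ 2 * m := by
    have := @cluster_diff_frobenius _ _ _ Θ Θ' h01 h01' hrow hrow'
      (fun i => @instDecidableNot _ (Fintype.decidablePiFintype (Θ i) (Θ' i))) hm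
    simpa [Matrix.sub_apply] using this
  have hEn : specNorm (Θ' - Θ) ≤ Real.sqrt (2 * m) :=
    specNorm_le_sqrt _ _ (by positivity)
      (frobenius_mulVec_bound _ _ hfro)
  have hETn : specNorm (Θ' - Θ)ᵀ ≤ Real.sqrt (2 * m) := by
    apply specNorm_le_sqrt _ _ (by positivity)
    apply frobenius_mulVec_bound
    rw [Finset.sum_comm]
    simpa [Matrix.transpose_apply] using hfro
  -- decomposition
  have hdecomp : Θ' * B * Θ'ᵀ - Θ * B * Θᵀ
      = (Θ' - Θ) * B * Θ'ᵀ + Θ * B * (Θ' - Θ)ᵀ := by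
    rw [Matrix.transpose_sub, Matrix.sub_mul, Matrix.sub_mul, Matrix.mul_sub]
    abel
  have hX : specNorm ((Θ' - Θ) * B * Θ'ᵀ) ≤ Real.sqrt (2*m) * (C*α) * Real.sqrt nmax :=
    specNorm_triple_le _ _ _ hEn hBnorm hΘ'Tn
  have hY : specNorm (Θ * B * (Θ' - Θ)ᵀ) ≤ Real.sqrt nmax * (C*α) * Real.sqrt (2*m) :=
    specNorm_triple_le _ _ _ hΘn hBnorm hETn
  calc specNorm (Θ' * B * Θ'ᵀ - Θ * B * Θᵀ)
      = specNorm ((Θ' - Θ) * B * Θ'ᵀ + Θ * B * (Θ' - Θ)ᵀ) := by rw [hdecomp]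
    _ ≤ specNorm ((Θ' - Θ) * B * Θ'ᵀ) + specNorm (Θ * B * (Θ' - Θ)ᵀ) :=
        specNorm_add_le _ _
    _ ≤ Real.sqrt (2*m) * (C*α) * Real.sqrt nmax + Real.sqrt nmax * (C*α) * Real.sqrt (2*m) :=
        add_le_add hX hY
    _ = 2 * C * α * (Real.sqrt (2*m) * Real.sqrt nmax) := by ring
    _ = 2 * C * α * Real.sqrt (2 * m * nmax) := by
        rw [← Real.sqrt_mul (by positivity)]
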